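/- Let λ ∈ ℂ ∪ {∞}. Every symmetric invariant bilinear form on W_B(λ) is identically zero. The space of symmetric invariant bilinear forms on W_A(λ) is one-dimensional, spanned by the form θ_A determined by θ_A(A_0, A_0) = 1 and θ_A vanishing on all other pairs of basis vectors (i.e., θ_A(L_n, L_m) = θ_A(L_n, A_m) = 0 for all n, m, and θ_A(A_n, A_m) = 0 unless n = m = 0). -/

import Mathlib

/-- The coefficient `n(n+1)λ`, where `λ = ∞` (encoded by `none`) gives `n²`. -/
def lamTerm (lam : Option ℂ) (n : ℤ) : ℂ :=
  match lam with
  | some l => (n : ℂ) * ((n : ℂ) + 1) * l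
  | none => (n : ℂ) ^ 2

lemma lamTerm_zero (lam : Option ℂ) : lamTerm lam 0 = 0 := by
  cases lam <;> simp [lamTerm]

noncomputable def thA (LA : Type) [LieRing LA] [LieAlgebra ℂ LA]
    (bA : Module.Basis (ℤ ⊕ ℤ) ℂ LA) : LA →ₗ[ℂ] LA →ₗ[ℂ] ℂ :=
  LinearMap.mk₂ ℂ (fun x y => bA.coord (Sum.inr 0) x * bA.coord (Sum.inr 0) y)
    (fun x x' y => by simp [add_mul])
    (fun a x y => by simp [mul_assoc])
    (fun x y y' => by simp [mul_add])
    (fun a x y => by simp; ring)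

lemma thA_apply (LA : Type) [LieRing LA] [LieAlgebra ℂ LA]
    (bA : Module.Basis (ℤ ⊕ ℤ) ℂ LA) (x y : LA) :
    thA LA bA x y = bA.repr x (Sum.inr 0) * bA.repr y (Sum.inr 0) := by
  simp [thA, Module.Basis.coord_apply]

lemma coord_basis (LA : Type) [LieRing LA] [LieAlgebra ℂ LA]
    (bA : Module.Basis (ℤ ⊕ ℤ) ℂ LA) (i j : ℤ ⊕ ℤ) :
    bA.coord i (bA j) = if j = i then 1 else 0 := by
  simp [Module.Basis.coord_apply, Module.Basis.repr_self, Finsupp.single_apply]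

lemma coord_bracket (lam : Option ℂ)
    (LA : Type) [LieRing LA] [LieAlgebra ℂ LA] (bA : Module.Basis (ℤ ⊕ ℤ) ℂ LA)
    (hLLA : ∀ n m : ℤ,
      ⁅bA (Sum.inl n), bA (Sum.inl m)⁆ = ((m : ℂ) - (n : ℂ)) • bA (Sum.inl (n + m)))
    (hLA : ∀ n m : ℤ,
      ⁅bA (Sum.inl n), bA (Sum.inr m)⁆ =
        ((n : ℂ) + (m : ℂ) + (if m = 0 then lamTerm lam n else 0)) • bA (Sum.inr (n + m)))
    (hAA : ∀ n m : ℤ, ⁅bA (Sum.inr n), bA (Sum.inr m)⁆ = 0)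
    (x y : LA) : bA.coord (Sum.inr 0) ⁅x, y⁆ = 0 := by
  set Ψ : LA →ₗ[ℂ] LA →ₗ[ℂ] ℂ :=
    LinearMap.mk₂ ℂ (fun x y => bA.coord (Sum.inr 0) ⁅x, y⁆)
      (fun x x' y => by simp [add_lie])
      (fun a x y => by simp [smul_lie])
      (fun x y y' => by simp [lie_add])
      (fun a x y => by simp [lie_smul]) with hΨ
  have main : ∀ n m : ℤ,
      ((n : ℂ) + (m : ℂ) + (if m = 0 then lamTerm lam n else 0)) *
        (if (Sum.inr (n + m) : ℤ ⊕ ℤ) = Sum.inr 0 then (1 : ℂ) else 0) = 0 := by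
    intro n m
    rcases eq_or_ne m 0 with hm | hm
    · subst hm
      rw [if_pos rfl]
      rcases eq_or_ne n 0 with hn | hn
      · subst hn; simp [lamTerm_zero]
      · have hne : (Sum.inr (n + 0) : ℤ ⊕ ℤ) ≠ Sum.inr 0 := by simp [hn]
        rw [if_neg hne]
        ring
    · rw [if_neg hm]
      rcases eq_or_ne (n + m) 0 with h | h
      · have he : (Sum.inr (n + m) : ℤ ⊕ ℤ) = Sum.inr 0 := by rw [h]
        rw [if_pos he]
        have hc : ((n : ℂ) + m) = 0 := by
          have := congrArg (fun z : ℤ => (z : ℂ)) h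
          push_cast at this
          exact this
        linear_combination hc
      · have hne : (Sum.inr (n + m) : ℤ ⊕ ℤ) ≠ Sum.inr 0 := by simp [h]
        rw [if_neg hne]
        ring
  have hz : Ψ = 0 := by
    apply bA.ext
    intro i
    apply bA.ext
    intro j
    simp only [LinearMap.zero_apply]
    cases i with
    | inl n =>
      cases j with
      | inl m =>
        simp only [hΨ, LinearMap.mk₂_apply]
        rw [hLLA n m]
        simp [coord_basis]
      | inr m =>
        simp only [hΨ, LinearMap.mk₂_apply]
        rw [hLA n m, map_smul, coord_basis, smul_eq_mul]
        exact main n m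
    | inr n =>
      cases j with
      | inl m =>
        simp only [hΨ, LinearMap.mk₂_apply]
        rw [← lie_skew, hLA m n, map_neg, map_smul, coord_basis, smul_eq_mul]
        rw [main m n]
        ring
      | inr m =>
        simp only [hΨ, LinearMap.mk₂_apply]
        rw [hAA n m]
        simp
  have := DFunLike.congr_fun (DFunLike.congr_fun hz x) y
  simpa [hΨ] using this

lemma key (c : ℤ → ℤ → ℂ) (hc0 : ∀ m : ℤ, c 0 m = (m : ℂ))
    (hcg : c (-1) 0 * c 1 (-1) = 0)
    (L : Type) [LieRing L] [LieAlgebra ℂ L] (b : Module.Basis (ℤ ⊕ ℤ) ℂ L)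
    (hLL : ∀ n m : ℤ, ⁅b (Sum.inl n), b (Sum.inl m)⁆ = ((m : ℂ) - (n : ℂ)) • b (Sum.inl (n + m)))
    (hLX : ∀ n m : ℤ, ⁅b (Sum.inl n), b (Sum.inr m)⁆ = c n m • b (Sum.inr (n + m)))
    (hXX : ∀ n m : ℤ, ⁅b (Sum.inr n), b (Sum.inr m)⁆ = 0)
    (θ : L →ₗ[ℂ] L →ₗ[ℂ] ℂ) (hs : ∀ x y, θ x y = θ y x)
    (hi : ∀ x y z, θ ⁅x, y⁆ z = θ x ⁅y, z⁆) :
    (∀ n m : ℤ, θ (b (Sum.inl n)) (b (Sum.inl m)) = 0) ∧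
    (∀ n m : ℤ, θ (b (Sum.inl n)) (b (Sum.inr m)) = 0) ∧
    (∀ n m : ℤ, ¬(n = 0 ∧ m = 0) → θ (b (Sum.inr n)) (b (Sum.inr m)) = 0) ∧
    (∀ a : ℤ, c a (-a) * θ (b (Sum.inr 0)) (b (Sum.inr 0)) = 0) := by
  -- weight lemma
  have hw : ∀ (u v : L) (a a' : ℂ), ⁅b (Sum.inl 0), u⁆ = a • u → ⁅b (Sum.inl 0), v⁆ = a' • v →
      (a + a') * θ u v = 0 := by
    intro u v a a' hu hv
    have h1 := hi (b (Sum.inl 0)) u v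
    have h2 := hi (b (Sum.inl 0)) v u
    rw [hu] at h1
    rw [hv] at h2
    rw [← lie_skew v u] at h2
    simp only [map_smul, map_neg, LinearMap.smul_apply, LinearMap.neg_apply, smul_eq_mul] at h1 h2
    linear_combination h1 + h2 + a' * hs u v
  have hwL : ∀ m : ℤ, ⁅b (Sum.inl 0), b (Sum.inl m)⁆ = (m : ℂ) • b (Sum.inl m) := by
    intro m
    rw [hLL 0 m]
    norm_num
  have hwX : ∀ m : ℤ, ⁅b (Sum.inl 0), b (Sum.inr m)⁆ = (m : ℂ) • b (Sum.inr m) := by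
    intro m
    rw [hLX 0 m, hc0]
    norm_num
  have hcast : ∀ {n m : ℤ}, n + m ≠ 0 → (n : ℂ) + (m : ℂ) ≠ 0 := by
    intro n m h
    have : ((n + m : ℤ) : ℂ) ≠ 0 := Int.cast_ne_zero.mpr h
    push_cast at this
    exact this
  -- LL part
  set F : ℤ → ℂ := fun n => θ (b (Sum.inl n)) (b (Sum.inl (-n))) with hF
  have hLLne : ∀ n m : ℤ, n + m ≠ 0 → θ (b (Sum.inl n)) (b (Sum.inl m)) = 0 := by
    intro n m h
    have := hw (b (Sum.inl n)) (b (Sum.inl m)) n m (hwL n) (hwL m)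
    exact (mul_eq_zero.mp this).resolve_left (hcast h)
  have hR : ∀ n m : ℤ, ((m : ℂ) - n) * F (n + m) = (-(n : ℂ) - 2 * m) * F n := by
    intro n m
    have h := hi (b (Sum.inl n)) (b (Sum.inl m)) (b (Sum.inl (-(n + m))))
    rw [hLL n m, hLL m (-(n + m))] at h
    have e1 : m + -(n + m) = -n := by ring
    rw [e1] at h
    simp only [map_smul, LinearMap.smul_apply, smul_eq_mul] at h
    push_cast at h
    linear_combination h
  have hFsymm : ∀ n : ℤ, F (-n) = F n := by
    intro n
    have := hs (b (Sum.inl n)) (b (Sum.inl (-n)))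
    simp only [hF, neg_neg]
    exact this.symm
  have hF1 : F 1 = 0 := by
    have h := hR 1 1
    linear_combination h / 3
  have hF0 : F 0 = 0 := by
    have h := hR 0 1
    rw [show (0 : ℤ) + 1 = 1 from by norm_num, hF1] at h
    linear_combination h / 2
  have hF2 : F 2 = 0 := by
    have h := hR (-2) 3
    rw [show (-2 : ℤ) + 3 = 1 from by norm_num, hF1, hFsymm 2] at h
    linear_combination h / 4
  have hFup : ∀ k : ℕ, F (k + 2) = 0 := by
    intro k
    induction k with
    | zero => exact hF2
    | succ k ih =>
      have h := hR ((k : ℤ) + 2) 1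
      have e : (k : ℤ) + 2 + 1 = (k : ℤ) + 3 := by ring
      rw [e, ih] at h
      push_cast at h
      have hne : (1 : ℂ) - ((k : ℂ) + 2) ≠ 0 := by
        have h1 : ((k + 1 : ℕ) : ℂ) ≠ 0 := Nat.cast_ne_zero.mpr (Nat.succ_ne_zero k)
        push_cast at h1
        intro hc
        apply h1
        linear_combination -hc
      have h0 : ((1 : ℂ) - ((k : ℂ) + 2)) * F ((k : ℤ) + 3) = 0 := by linear_combination h
      have hz := (mul_eq_zero.mp h0).resolve_left hne
      have e2 : ((k + 1 : ℕ) : ℤ) + 2 = (k : ℤ) + 3 := by push_cast; ring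
      rw [e2]
      exact hz
  have hFall : ∀ n : ℤ, F n = 0 := by
    intro n
    rcases lt_trichotomy n 0 with h | h | h
    · rw [← hFsymm]
      rcases lt_trichotomy (-n) 1 with h' | h' | h'
      · omega
      · rw [h']; exact hF1
      · obtain ⟨k, hk⟩ : ∃ k : ℕ, -n = (k : ℤ) + 2 := ⟨(-n - 2).toNat, by omega⟩
        rw [hk]; exact hFup k
    · rw [h]; exact hF0
    · rcases lt_trichotomy n 2 with h' | h' | h'
      · have : n = 1 := by omega
        rw [this]; exact hF1
      · rw [h']; exact hF2
      · obtain ⟨k, hk⟩ : ∃ k : ℕ, n = (k : ℤ) + 2 := ⟨(n - 2).toNat, by omega⟩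
        rw [hk]; exact hFup k
  have part1 : ∀ n m : ℤ, θ (b (Sum.inl n)) (b (Sum.inl m)) = 0 := by
    intro n m
    by_cases h : n + m = 0
    · have hm : m = -n := by omega
      rw [hm]
      exact hFall n
    · exact hLLne n m h
  -- LX part
  have hGrel : ∀ n : ℤ, (n : ℂ) * θ (b (Sum.inl n)) (b (Sum.inr (-n)))
      = c n (-n) * θ (b (Sum.inl 0)) (b (Sum.inr 0)) := by
    intro n
    have h := hi (b (Sum.inl 0)) (b (Sum.inl n)) (b (Sum.inr (-n)))
    rw [hLL 0 n, hLX n (-n)] at h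
    rw [show (0 : ℤ) + n = n from by ring, show n + -n = 0 from by ring] at h
    simp only [map_smul, LinearMap.smul_apply, smul_eq_mul] at h
    push_cast at h
    linear_combination h
  have hG0 : θ (b (Sum.inl 0)) (b (Sum.inr 0)) = 0 := by
    have h := hi (b (Sum.inl 1)) (b (Sum.inl (-1))) (b (Sum.inr 0))
    rw [hLL 1 (-1), hLX (-1) 0] at h
    rw [show (1 : ℤ) + -1 = 0 from by ring, show (-1 : ℤ) + 0 = -1 from by ring] at h
    simp only [map_smul, LinearMap.smul_apply, smul_eq_mul] at h
    have h1 := hGrel 1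
    push_cast at h h1
    linear_combination (-1/2 : ℂ) * h + (-1/2 : ℂ) * (c (-1) 0) * h1
      + (-1/2 : ℂ) * θ (b (Sum.inl 0)) (b (Sum.inr 0)) * hcg
  have part2 : ∀ n m : ℤ, θ (b (Sum.inl n)) (b (Sum.inr m)) = 0 := by
    intro n m
    by_cases h : n + m = 0
    · have hm : m = -n := by omega
      rw [hm]
      by_cases hn : n = 0
      · rw [hn, show (-0 : ℤ) = 0 from neg_zero]
        exact hG0
      · have h1 := hGrel n
        rw [hG0, mul_zero] at h1
        exact (mul_eq_zero.mp h1).resolve_left (Int.cast_ne_zero.mpr hn)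
    · have := hw (b (Sum.inl n)) (b (Sum.inr m)) n m (hwL n) (hwX m)
      exact (mul_eq_zero.mp this).resolve_left (hcast h)
  -- XX part
  have hH : ∀ a b' m : ℤ, c a b' * θ (b (Sum.inr (a + b'))) (b (Sum.inr m)) = 0 := by
    intro a b' m
    have h := hi (b (Sum.inl a)) (b (Sum.inr b')) (b (Sum.inr m))
    rw [hLX a b', hXX b' m] at h
    simp only [map_smul, LinearMap.smul_apply, smul_eq_mul, map_zero] at h
    exact h
  have hXne : ∀ n m : ℤ, n ≠ 0 → θ (b (Sum.inr n)) (b (Sum.inr m)) = 0 := by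
    intro n m hn
    have h := hH 0 n m
    rw [hc0, zero_add] at h
    exact (mul_eq_zero.mp h).resolve_left (Int.cast_ne_zero.mpr hn)
  have part3 : ∀ n m : ℤ, ¬(n = 0 ∧ m = 0) → θ (b (Sum.inr n)) (b (Sum.inr m)) = 0 := by
    intro n m hnm
    by_cases hn : n = 0
    · have hm : m ≠ 0 := fun hm => hnm ⟨hn, hm⟩
      rw [hs]
      exact hXne m n hm
    · exact hXne n m hn
  have part4 : ∀ a : ℤ, c a (-a) * θ (b (Sum.inr 0)) (b (Sum.inr 0)) = 0 := by
    intro a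
    have h := hH a (-a) 0
    rw [show a + -a = 0 from by ring] at h
    exact h
  exact ⟨part1, part2, part3, part4⟩


/-- every symmetric invariant bilinear form on `W_B(λ)` is zero, while the
space of symmetric invariant bilinear forms on `W_A(λ)` is one-dimensional, spanned by the
form `θ_A` with `θ_A(A_0, A_0) = 1` which vanishes on all other pairs of basis vectors. -/
theorem stmt_11 (lam : Option ℂ)
    (LA : Type) [LieRing LA] [LieAlgebra ℂ LA] (bA : Module.Basis (ℤ ⊕ ℤ) ℂ LA)
    (hLLA : ∀ n m : ℤ,
      ⁅bA (Sum.inl n), bA (Sum.inl m)⁆ = ((m : ℂ) - (n : ℂ)) • bA (Sum.inl (n + m)))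
    (hLA : ∀ n m : ℤ,
      ⁅bA (Sum.inl n), bA (Sum.inr m)⁆ =
        ((n : ℂ) + (m : ℂ) + (if m = 0 then lamTerm lam n else 0)) • bA (Sum.inr (n + m)))
    (hAA : ∀ n m : ℤ, ⁅bA (Sum.inr n), bA (Sum.inr m)⁆ = 0)
    (LB : Type) [LieRing LB] [LieAlgebra ℂ LB] (bB : Module.Basis (ℤ ⊕ ℤ) ℂ LB)
    (hLLB : ∀ n m : ℤ,
      ⁅bB (Sum.inl n), bB (Sum.inl m)⁆ = ((m : ℂ) - (n : ℂ)) • bB (Sum.inl (n + m)))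
    (hLB : ∀ n m : ℤ,
      ⁅bB (Sum.inl n), bB (Sum.inr m)⁆ =
        ((m : ℂ) - (if n + m = 0 then lamTerm lam n else 0)) • bB (Sum.inr (n + m)))
    (hBB : ∀ n m : ℤ, ⁅bB (Sum.inr n), bB (Sum.inr m)⁆ = 0) :
    (∀ θ : LB →ₗ[ℂ] LB →ₗ[ℂ] ℂ, (∀ x y : LB, θ x y = θ y x) →
      (∀ x y z : LB, θ ⁅x, y⁆ z = θ x ⁅y, z⁆) → θ = 0) ∧
    (∀ θ : LA →ₗ[ℂ] LA →ₗ[ℂ] ℂ, (∀ x y : LA, θ x y = θ y x) →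
      (∀ x y z : LA, θ ⁅x, y⁆ z = θ x ⁅y, z⁆) →
      ∃ c : ℂ, ∀ x y : LA,
        θ x y = c * (bA.repr x (Sum.inr 0) * bA.repr y (Sum.inr 0))) ∧
    (∃ θA : LA →ₗ[ℂ] LA →ₗ[ℂ] ℂ,
      (∀ x y : LA, θA x y = θA y x) ∧
      (∀ x y z : LA, θA ⁅x, y⁆ z = θA x ⁅y, z⁆) ∧
      θA (bA (Sum.inr 0)) (bA (Sum.inr 0)) = 1 ∧
      (∀ n m : ℤ, θA (bA (Sum.inl n)) (bA (Sum.inl m)) = 0) ∧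
      (∀ n m : ℤ, θA (bA (Sum.inl n)) (bA (Sum.inr m)) = 0) ∧
      (∀ n m : ℤ, ¬(n = 0 ∧ m = 0) → θA (bA (Sum.inr n)) (bA (Sum.inr m)) = 0)) := by
  -- properties of the model form θA
  have hθAapp : ∀ x y : LA, thA LA bA x y
      = bA.repr x (Sum.inr 0) * bA.repr y (Sum.inr 0) := thA_apply LA bA
  have hθAsym : ∀ x y : LA, thA LA bA x y = thA LA bA y x := by
    intro x y
    rw [hθAapp, hθAapp]
    ring
  have hbr := coord_bracket lam LA bA hLLA hLA hAA
  have hθAinv : ∀ x y z : LA, thA LA bA ⁅x, y⁆ z = thA LA bA x ⁅y, z⁆ := by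
    intro x y z
    rw [hθAapp, hθAapp]
    have h1 := hbr x y
    have h2 := hbr y z
    rw [Module.Basis.coord_apply] at h1 h2
    rw [h1, h2, zero_mul, mul_zero]
  have hθAbasis : ∀ i j : ℤ ⊕ ℤ, thA LA bA (bA i) (bA j)
      = (if i = Sum.inr 0 then 1 else 0) * (if j = Sum.inr 0 then 1 else 0) := by
    intro i j
    rw [hθAapp]
    simp [Module.Basis.repr_self, Finsupp.single_apply]
  -- the c-functions and their hypotheses
  have hc0A : ∀ m : ℤ, ((0 : ℤ) : ℂ) + (m : ℂ) + (if m = 0 then lamTerm lam 0 else 0) = (m : ℂ) := by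
    intro m
    rcases eq_or_ne m 0 with hm | hm
    · subst hm; simp [lamTerm_zero]
    · rw [if_neg hm]; push_cast; ring
  have hc0B : ∀ m : ℤ, (m : ℂ) - (if (0 : ℤ) + m = 0 then lamTerm lam 0 else 0) = (m : ℂ) := by
    intro m
    rcases eq_or_ne m 0 with hm | hm
    · subst hm; simp [lamTerm_zero]
    · rw [if_neg (by omega)]; ring
  refine ⟨?_, ?_, ?_⟩
  · -- W_B : every symmetric invariant form is zero
    intro θ hsym hinv
    obtain ⟨p1, p2, p3, p4⟩ := key
      (fun n m => (m : ℂ) - (if n + m = 0 then lamTerm lam n else 0)) hc0B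
      (by norm_num) LB bB hLLB hLB hBB θ hsym hinv
    have hT : θ (bB (Sum.inr 0)) (bB (Sum.inr 0)) = 0 := by
      have h1 := p4 1
      have h2 := p4 2
      norm_num at h1 h2
      rcases h1 with h1 | h1
      · rcases h2 with h2 | h2
        · exfalso
          cases lam with
          | none => norm_num [lamTerm] at h1
          | some l =>
            simp only [lamTerm] at h1 h2
            have hone : (1 : ℂ) = 0 := by linear_combination h2 - 3 * h1
            exact one_ne_zero hone
        · exact h2
      · exact h1
    apply bB.ext
    intro i
    apply bB.ext
    intro j
    simp only [LinearMap.zero_apply]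
    cases i with
    | inl n =>
      cases j with
      | inl m => exact p1 n m
      | inr m => exact p2 n m
    | inr n =>
      cases j with
      | inl m => exact (hsym _ _).trans (p2 m n)
      | inr m =>
        by_cases h : n = 0 ∧ m = 0
        · obtain ⟨hn, hm⟩ := h
          subst hn; subst hm
          exact hT
        · exact p3 n m h
  · -- W_A : uniqueness
    intro θ hsym hinv
    obtain ⟨p1, p2, p3, -⟩ := key
      (fun n m => (n : ℂ) + (m : ℂ) + (if m = 0 then lamTerm lam n else 0)) hc0A
      (by norm_num) LA bA hLLA hLA hAA θ hsym hinv
    refine ⟨θ (bA (Sum.inr 0)) (bA (Sum.inr 0)), ?_⟩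
    have hEq : θ = θ (bA (Sum.inr 0)) (bA (Sum.inr 0)) • thA LA bA := by
      apply bA.ext
      intro i
      apply bA.ext
      intro j
      rw [LinearMap.smul_apply, LinearMap.smul_apply, smul_eq_mul]
      cases i with
      | inl n =>
        cases j with
        | inl m => rw [p1 n m, hθAbasis]; simp
        | inr m => rw [p2 n m, hθAbasis]; simp
      | inr n =>
        cases j with
        | inl m => rw [hsym, p2 m n, hθAbasis]; simp
        | inr m =>
          by_cases h : n = 0 ∧ m = 0
          · obtain ⟨hn, hm⟩ := h
            subst hn; subst hm
            rw [hθAbasis]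
            simp
          · rw [p3 n m h, hθAbasis]
            rcases not_and_or.mp h with hn | hn <;> simp [hn]
    intro x y
    have hxy := DFunLike.congr_fun (DFunLike.congr_fun hEq x) y
    rw [LinearMap.smul_apply, LinearMap.smul_apply, smul_eq_mul, hθAapp] at hxy
    exact hxy
  · -- existence of θA
    refine ⟨thA LA bA, hθAsym, hθAinv, ?_, ?_, ?_, ?_⟩
    · rw [hθAbasis]; simp
    · intro n m; rw [hθAbasis]; simp
    · intro n m; rw [hθAbasis]; simp
    · intro n m h
      rw [hθAbasis]
      rcases not_and_or.mp h with hn | hn <;> simp [hn]
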